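/- If ζ is a Liouville number and k is a positive integer, then ζ^k is a Liouville number. -/

import Mathlib

theorem liouville_pow (ζ : ℝ) (hζ : Liouville ζ) (k : ℕ) (hk : 0 < k) :
    Liouville (ζ ^ k) := by
  have hirr := hζ.irrational
  set C : ℝ := k * (|ζ| + 1) ^ (k - 1) with hC
  have hC0 : 0 < C := by positivity
  obtain ⟨K, hK⟩ := exists_nat_gt C
  have hK1 : 0 < K := by
    by_contra h
    push_neg at h
    interval_cases K
    · exact absurd (hC0.trans hK) (by norm_num)
  intro n
  obtain ⟨p, q, hq, hne, happ⟩ := hζ (n * k + K)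
  have hq0 : (0 : ℝ) < (q : ℝ) := by exact_mod_cast zero_lt_one.trans hq
  have hq2 : (2 : ℝ) ≤ (q : ℝ) := by exact_mod_cast hq
  set r : ℝ := (p : ℝ) / q with hr
  have hqm : (2 : ℝ) ≤ (q : ℝ) ^ (n * k + K) := by
    calc (2:ℝ) ≤ (q:ℝ) := hq2
    _ ≤ (q:ℝ) ^ (n * k + K) := le_self_pow₀ (by linarith) (by omega)
  have h1 : |ζ - r| < 1 := happ.trans_le (by
    rw [div_le_one (by linarith)]; linarith)
  have hrabs : |r| ≤ |ζ| + 1 := by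
    have := abs_sub_abs_le_abs_sub r ζ
    rw [abs_sub_comm] at this
    linarith
  set S : ℝ := ∑ i ∈ Finset.range k, ζ ^ i * r ^ (k - 1 - i) with hS
  have hfac : S * (ζ - r) = ζ ^ k - r ^ k := geom_sum₂_mul ζ r k
  have hζ1 : |ζ| ≤ |ζ| + 1 := by linarith [abs_nonneg ζ]
  have hSabs : |S| ≤ C := by
    calc |S| ≤ ∑ i ∈ Finset.range k, |ζ ^ i * r ^ (k - 1 - i)| :=
          Finset.abs_sum_le_sum_abs _ _
    _ ≤ ∑ _i ∈ Finset.range k, (|ζ| + 1) ^ (k - 1) := by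
        refine Finset.sum_le_sum fun i hi => ?_
        rw [abs_mul, abs_pow, abs_pow]
        have hik : i ≤ k - 1 := Nat.le_sub_one_of_lt (Finset.mem_range.mp hi)
        calc |ζ| ^ i * |r| ^ (k - 1 - i)
            ≤ (|ζ| + 1) ^ i * (|ζ| + 1) ^ (k - 1 - i) :=
              mul_le_mul (pow_le_pow_left₀ (abs_nonneg ζ) hζ1 i)
                (pow_le_pow_left₀ (abs_nonneg r) hrabs _) (by positivity) (by positivity)
        _ = (|ζ| + 1) ^ (k - 1) := by
              rw [← pow_add]
              congr 1
              omega
    _ = C := by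
        rw [Finset.sum_const, Finset.card_range, nsmul_eq_mul]
  have hne' : ζ ^ k ≠ r ^ k := by
    intro h
    have habs : |ζ| = |r| := by
      have h2 : |ζ| ^ k = |r| ^ k := by rw [← abs_pow, ← abs_pow, h]
      exact (pow_left_inj₀ (abs_nonneg ζ) (abs_nonneg r) hk.ne').mp h2
    rcases abs_eq_abs.mp habs with h' | h'
    · exact hne h'
    · exact hirr ⟨(-p : ℚ) / (q : ℚ), by push_cast; rw [h', hr]; ring⟩
  have hqK : C < (q : ℝ) ^ K := by
    calc C < (K : ℝ) := hK
    _ < (2 : ℝ) ^ K := by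
        have := Nat.lt_two_pow_self (n := K)
        exact_mod_cast this
    _ ≤ (q : ℝ) ^ K := by gcongr
  have hcast : ((p ^ k : ℤ) : ℝ) / ((q ^ k : ℤ) : ℝ) = r ^ k := by
    rw [hr, div_pow]; push_cast; ring
  refine ⟨p ^ k, q ^ k, one_lt_pow₀ hq hk.ne', ?_, ?_⟩
  · rw [hcast]; exact hne'
  · rw [hcast, ← hfac, abs_mul]
    have hζr : 0 < |ζ - r| := abs_sub_pos.mpr hne
    have hbound : |S| * |ζ - r| < C * (1 / (q : ℝ) ^ (n * k + K)) := by
      calc |S| * |ζ - r| ≤ C * |ζ - r| := by gcongr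
      _ < C * (1 / (q : ℝ) ^ (n * k + K)) := by gcongr
    refine hbound.trans_le ?_
    have hcast2 : ((q ^ k : ℤ) : ℝ) ^ n = (q : ℝ) ^ (n * k) := by
      push_cast
      rw [← pow_mul, mul_comm]
    rw [hcast2, mul_one_div, div_le_div_iff₀ (by positivity) (by positivity), one_mul, pow_add]
    nlinarith [pow_pos hq0 (n * k), hqK.le, pow_pos hq0 K]
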